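/- Consistency of the B₂ (canonical) scattering diagram used for the del Pezzo surface of degree 6: as automorphisms of K = ℂ(x,y), 𝒦_{(0,1),2} ∘ 𝒦_{(1,0),1} = 𝒦_{(1,0),1} ∘ 𝒦_{(1,1),2} ∘ 𝒦_{(1,2),1} ∘ 𝒦_{(0,1),2}. -/

import Mathlib

set_option maxHeartbeats 1000000
set_option synthInstance.maxHeartbeats 400000

open MvPolynomial

noncomputable section

/-- `K = ℂ(x,y)`, the field of rational functions in two variables over `ℂ`. -/
abbrev K : Type := FractionRing (MvPolynomial (Fin 2) ℂ)

/-- The rational function `x`. -/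
noncomputable def xx : K := algebraMap (MvPolynomial (Fin 2) ℂ) K (X 0)

/-- The rational function `y`. -/
noncomputable def yy : K := algebraMap (MvPolynomial (Fin 2) ℂ) K (X 1)

/-- `z^μ = x^m y^n` for `μ = (m,n) ∈ ℤ²`. -/
noncomputable def zmon (μ : ℤ × ℤ) : K := xx ^ μ.1 * yy ^ μ.2

/-- `⟨μ,γ⟩ = m b − n a` for `μ = (m,n)`, `γ = (a,b)`. -/
def pairing (μ γ : ℤ × ℤ) : ℤ := μ.1 * γ.2 - μ.2 * γ.1

/-- `Φ` is the wall-crossing transformation `𝒦_{γ,d}`: the `ℂ`-algebra automorphism of `K`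
satisfying `𝒦_{γ,d}(z^μ) = z^μ (1+z^γ)^{d⟨μ,γ⟩}` for all `μ ∈ ℤ²`. -/
def IsWallCrossing (d : ℤ) (γ : ℤ × ℤ) (Φ : K ≃ₐ[ℂ] K) : Prop :=
  ∀ μ : ℤ × ℤ, Φ (zmon μ) = zmon μ * (1 + zmon γ) ^ (d * pairing μ γ)

/-- The image in `K` of a polynomial with constant coefficient `1` is nonzero. -/
lemma alg_ne (p : MvPolynomial (Fin 2) ℂ) (h : MvPolynomial.constantCoeff p = 1) :
    algebraMap (MvPolynomial (Fin 2) ℂ) K p ≠ 0 := by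
  intro h0
  have hp : p = 0 := IsFractionRing.injective (MvPolynomial (Fin 2) ℂ) K (by simpa using h0)
  rw [hp] at h
  simp at h

/-- Two `ℂ`-algebra endomorphisms of `K` agreeing on `x` and `y` are equal. -/
lemma ext_aux (φ ψ : K →ₐ[ℂ] K) (hx : φ xx = ψ xx) (hy : φ yy = ψ yy) : φ = ψ := by
  have h : (φ : K →+* K) = (ψ : K →+* K) := by
    apply IsLocalization.ringHom_ext (nonZeroDivisors (MvPolynomial (Fin 2) ℂ))
    apply MvPolynomial.ringHom_ext
    · intro a
      have h1 : (algebraMap (MvPolynomial (Fin 2) ℂ) K) (C a) = algebraMap ℂ K a := by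
        rw [show (C a : MvPolynomial (Fin 2) ℂ) = algebraMap ℂ _ a from rfl]
        exact (IsScalarTower.algebraMap_apply ℂ (MvPolynomial (Fin 2) ℂ) K a).symm
      simp [h1, φ.commutes, ψ.commutes]
    · intro i
      fin_cases i
      · simpa [xx] using hx
      · simpa [yy] using hy
  exact AlgHom.coe_ringHom_injective h

/-- Consistency of the B₂ canonical scattering diagram: as automorphisms of `K = ℂ(x,y)`,
`𝒦_{(0,1),2} ∘ 𝒦_{(1,0),1} = 𝒦_{(1,0),1} ∘ 𝒦_{(1,1),2} ∘ 𝒦_{(1,2),1} ∘ 𝒦_{(0,1),2}`. -/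
theorem B2_consistency
    (K10 K01 K12 K11 : K ≃ₐ[ℂ] K)
    (h10 : IsWallCrossing 1 (1, 0) K10) (h01 : IsWallCrossing 2 (0, 1) K01)
    (h12 : IsWallCrossing 1 (1, 2) K12) (h11 : IsWallCrossing 2 (1, 1) K11) :
    ∀ f : K, K01 (K10 f) = K10 (K11 (K12 (K01 f))) := by
  -- values of the wall crossings on the generators
  have e1 : K10 xx = xx := by simpa [zmon, pairing, zpow_ofNat] using h10 (1,0)
  have e2 : K10 yy = yy / (1 + xx) := by
    rw [div_eq_mul_inv]; simpa [zmon, pairing, zpow_ofNat] using h10 (0,1)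
  have a1 : K01 xx = xx * (1 + yy) ^ 2 := by simpa [zmon, pairing, zpow_ofNat] using h01 (1,0)
  have a2 : K01 yy = yy := by simpa [zmon, pairing, zpow_ofNat] using h01 (0,1)
  have b1 : K12 xx = xx * (1 + xx * yy ^ 2) ^ 2 := by
    simpa [zmon, pairing, zpow_ofNat] using h12 (1,0)
  have b2 : K12 yy = yy / (1 + xx * yy ^ 2) := by
    rw [div_eq_mul_inv]; simpa [zmon, pairing, zpow_ofNat] using h12 (0,1)
  have c1 : K11 xx = xx * (1 + xx * yy) ^ 2 := by
    simpa [zmon, pairing, zpow_ofNat] using h11 (1,0)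
  have c2 : K11 yy = yy / (1 + xx * yy) ^ 2 := by
    rw [div_eq_mul_inv]; simpa [zmon, pairing, zpow_ofNat] using h11 (0,1)
  -- nonvanishing facts
  have n1 : (1 : K) + xx ≠ 0 := by
    have h : (1 : K) + xx = algebraMap (MvPolynomial (Fin 2) ℂ) K (1 + X 0) := by
      rw [map_add, map_one]; rfl
    rw [h]; exact alg_ne _ (by simp)
  have n3 : (1 : K) + xx * yy ≠ 0 := by
    have h : (1 : K) + xx * yy = algebraMap (MvPolynomial (Fin 2) ℂ) K (1 + X 0 * X 1) := by
      rw [map_add, map_one, map_mul]; rfl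
    rw [h]; exact alg_ne _ (by simp)
  have n4 : (1 : K) + xx * yy ^ 2 ≠ 0 := by
    have h : (1 : K) + xx * yy ^ 2
        = algebraMap (MvPolynomial (Fin 2) ℂ) K (1 + X 0 * X 1 ^ 2) := by
      rw [map_add, map_one, map_mul, map_pow]; rfl
    rw [h]; exact alg_ne _ (by simp)
  have n5 : ((1 : K) + xx * yy) ^ 2 + xx * yy ^ 2 ≠ 0 := by
    have h : ((1 : K) + xx * yy) ^ 2 + xx * yy ^ 2
        = algebraMap (MvPolynomial (Fin 2) ℂ) K ((1 + X 0 * X 1) ^ 2 + X 0 * X 1 ^ 2) := by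
      rw [map_add, map_pow, map_add, map_one, map_mul, map_mul, map_pow]; rfl
    rw [h]; exact alg_ne _ (by simp)
  have n6 : (1 : K) + xx * (1 + yy) ^ 2 ≠ 0 := by
    have h : (1 : K) + xx * (1 + yy) ^ 2
        = algebraMap (MvPolynomial (Fin 2) ℂ) K (1 + X 0 * (1 + X 1) ^ 2) := by
      rw [map_add, map_one, map_mul, map_pow, map_add, map_one]; rfl
    rw [h]; exact alg_ne _ (by simp)
  -- the x-chain
  have S1 : K12 (K01 xx) = xx * (1 + yy + xx * yy ^ 2) ^ 2 := by
    rw [a1]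
    simp only [map_mul, map_pow, map_add, map_one]
    rw [b1, b2]
    field_simp
    ring
  have S2 : K11 (K12 (K01 xx)) = xx * (1 + yy + xx * yy) ^ 2 := by
    rw [S1]
    simp only [map_mul, map_pow, map_add, map_one]
    rw [c1, c2]
    field_simp
    ring
  have S3 : K10 (K11 (K12 (K01 xx))) = xx * (1 + yy) ^ 2 := by
    rw [S2]
    simp only [map_mul, map_pow, map_add, map_one]
    rw [e1, e2]
    field_simp
    ring
  have hx : K01 (K10 xx) = K10 (K11 (K12 (K01 xx))) := by
    rw [S3, e1, a1]
  -- the y-chain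
  have T2a : K11 ((1 : K) + xx * yy ^ 2)
      = (((1 : K) + xx * yy) ^ 2 + xx * yy ^ 2) / ((1 : K) + xx * yy) ^ 2 := by
    simp only [map_mul, map_pow, map_add, map_one]
    rw [c1, c2]
    field_simp
  have T2 : K11 (K12 (K01 yy)) = yy / (((1 : K) + xx * yy) ^ 2 + xx * yy ^ 2) := by
    rw [a2, b2, map_div₀, T2a, c2]
    field_simp
    have n3' : (1 : K) + yy * xx ≠ 0 := by rwa [mul_comm] at n3
    have n5' : ((1 : K) + yy * xx) ^ 2 + yy ^ 2 * xx ≠ 0 := by convert n5 using 1; ring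
    rw [div_eq_div_iff (mul_ne_zero n3' n5') n5']
    ring
  have T3a : K10 (((1 : K) + xx * yy) ^ 2 + xx * yy ^ 2)
      = ((1 : K) + xx * (1 + yy) ^ 2) / ((1 : K) + xx) := by
    simp only [map_mul, map_pow, map_add, map_one]
    rw [e1, e2]
    field_simp
    ring
  have T3 : K10 (K11 (K12 (K01 yy))) = yy / ((1 : K) + xx * (1 + yy) ^ 2) := by
    rw [T2, map_div₀, T3a, e2]
    field_simp
  have hy : K01 (K10 yy) = K10 (K11 (K12 (K01 yy))) := by
    rw [T3, e2, map_div₀, map_add, map_one, a1, a2]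
  -- conclude by extensionality
  intro f
  have key := ext_aux (K01.toAlgHom.comp K10.toAlgHom)
    (K10.toAlgHom.comp ((K11.toAlgHom.comp K12.toAlgHom).comp K01.toAlgHom))
    (by simpa using hx) (by simpa using hy)
  simpa using AlgHom.congr_fun key f

end
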